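/- Let M be a transitive Kripke model validating every instance of C_n, and M_Φ its transitive filtration through a finite subformula-closed set Φ. Then for every R_Φ-cluster C there exist x* ∈ W with [x*] ∈ C and a subset C* ⊆ C with at most n elements such that: x* ⇝ α for all α ∈ C*, and for all y ∈ W, if x* R y and [y] ∈ C then [y] ∈ C* and y ⇝ α for all α ∈ C*. Moreover if C is degenerate then C* is empty. -/

import Mathlib

/-- Modal formulas: variables, ⊤, ¬, ∧, □. -/
inductive Fml : Type
  | var : ℕ → Fml
  | top : Fml
  | neg : Fml → Fml
  | and : Fml → Fml → Fml
  | box : Fml → Fml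
deriving DecidableEq

namespace Fml
/-- Material implication, defined from ¬ and ∧. -/
def imp (φ ψ : Fml) : Fml := .neg (.and φ (.neg ψ))
/-- Disjunction. -/
def or (φ ψ : Fml) : Fml := .neg (.and (.neg φ) (.neg ψ))
/-- ◇φ := ¬□¬φ. -/
def dia (φ : Fml) : Fml := .neg (.box (.neg φ))
/-- □*φ := φ ∧ □φ. -/
def boxs (φ : Fml) : Fml := .and φ (.box φ)
/-- ◇*φ := φ ∨ ◇φ. -/
def dias (φ : Fml) : Fml := Fml.or φ (dia φ)
end Fml

/-- Kripke satisfaction. -/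
def sat {W : Type} (R : W → W → Prop) (V : ℕ → Set W) : W → Fml → Prop
  | x, .var p => x ∈ V p
  | _, .top => True
  | x, .neg φ => ¬ sat R V x φ
  | x, .and φ ψ => sat R V x φ ∧ sat R V x ψ
  | x, .box φ => ∀ y, R x y → sat R V y φ

/-- P_n(φ0; φ1,...,φn): P_0(φ0) = ◇φ0, P_n(φ0,φ1,...,φn) = ◇(φ1 ∧ P_{n-1}(φ0,φ2,...,φn)). -/
def Pfml (φ0 : Fml) : List Fml → Fml
  | [] => φ0.dia
  | ψ :: rest => (Fml.and ψ (Pfml φ0 rest)).dia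

/-- Conjunction of ¬(φ ∧ ψ) for ψ in the list. -/
def conjNeg (φ : Fml) : List Fml → Fml
  | [] => .top
  | ψ :: rest => .and (.neg (.and φ ψ)) (conjNeg φ rest)

/-- D_n: pairwise disjointness conjunction ⋀_{i<j} ¬(φ_i ∧ φ_j). -/
def Dfml : List Fml → Fml
  | [] => .top
  | φ :: rest => .and (conjNeg φ rest) (Dfml rest)

/-- The scheme C_n instance on φ0,φ1,...,φn (φs = [φ1,...,φn]). -/
def Cfml (φ0 : Fml) (φs : List Fml) : Fml :=
  ((Dfml (φ0 :: φs)).boxs).imp ((φ0.dia).imp ((Fml.and φ0 (Fml.neg (Pfml φ0 φs))).dia))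

/-- The scheme C_n* instance: as C_n but with ◇* in the consequent. -/
def CfmlStar (φ0 : Fml) (φs : List Fml) : Fml :=
  ((Dfml (φ0 :: φs)).boxs).imp ((φ0.dia).imp ((Fml.and φ0 (Fml.neg (Pfml φ0 φs))).dias))

/-- An ascending R-chain. -/
def AscChain {W : Type} (R : W → W → Prop) (x : ℕ → W) : Prop := ∀ m, R (x m) (x (m+1))

/-- A strictly ascending R-chain. -/
def StrictAscChain {W : Type} (R : W → W → Prop) (x : ℕ → W) : Prop :=
  AscChain R x ∧ ∀ m, ¬ R (x (m+1)) (x m)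

/-- The R-cluster of x. -/
def cluster {W : Type} (R : W → W → Prop) (x : W) : Set W := {y | x = y ∨ (R x y ∧ R y x)}

/-- The frame has a cycle of length k (k ≥ 1): k distinct points x_0 R x_1 R ... R x_{k-1} R x_0. -/
def HasCycle {W : Type} (R : W → W → Prop) (k : ℕ) : Prop :=
  1 ≤ k ∧ ∃ x : ℕ → W, (∀ i j, i < k → j < k → x i = x j → i = j) ∧
    ∀ i < k, R (x i) (x ((i+1) % k))

/-- Circumference at most n: every cycle has length ≤ n. -/
def CircumLE {W : Type} (R : W → W → Prop) (n : ℕ) : Prop := ∀ k, HasCycle R k → k ≤ n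

/-- The frame (W,R) validates the scheme C_n. -/
def ValidatesCn {W : Type} (R : W → W → Prop) (n : ℕ) : Prop :=
  ∀ (V : ℕ → Set W) (x : W) (φ0 : Fml) (φs : List Fml), φs.length = n →
    sat R V x (Cfml φ0 φs)

/-- A Boolean valuation on formulas (box-formulas and variables as atoms). -/
def BoolEval (w : Fml → Bool) : Prop :=
  w .top = true ∧ (∀ φ, w (.neg φ) = !w φ) ∧ (∀ φ ψ, w (.and φ ψ) = (w φ && w ψ))

/-- Propositional tautologies. -/
def Tautology (φ : Fml) : Prop := ∀ w, BoolEval w → w φ = true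

/-- Theorems of the smallest normal modal logic containing the axiom set Ax. -/
inductive Prov (Ax : Set Fml) : Fml → Prop
  | taut {φ} : Tautology φ → Prov Ax φ
  | kax (φ ψ) : Prov Ax ((Fml.box (φ.imp ψ)).imp ((Fml.box φ).imp (Fml.box ψ)))
  | ax {φ} : φ ∈ Ax → Prov Ax φ
  | mp {φ ψ} : Prov Ax (φ.imp ψ) → Prov Ax φ → Prov Ax ψ
  | nec {φ} : Prov Ax φ → Prov Ax (.box φ)

/-- All instances of the transitivity scheme 4. -/
def Ax4 : Set Fml := {χ | ∃ φ, χ = (Fml.box φ).imp (Fml.box (Fml.box φ))}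

/-- Axioms of K4C_n: scheme 4 together with all instances of scheme C_n. -/
def AxK4C (n : ℕ) : Set Fml :=
  Ax4 ∪ {χ | ∃ (φ0 : Fml) (φs : List Fml), φs.length = n ∧ χ = Cfml φ0 φs}

/-- Φ is closed under subformulas. -/
def SubClosed (Φ : Set Fml) : Prop :=
  (∀ φ, Fml.neg φ ∈ Φ → φ ∈ Φ) ∧ (∀ φ ψ, Fml.and φ ψ ∈ Φ → φ ∈ Φ ∧ ψ ∈ Φ) ∧
    (∀ φ, Fml.box φ ∈ Φ → φ ∈ Φ)

/-- x and y satisfy the same formulas of Φ. -/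
def eqv {W : Type} (R : W → W → Prop) (V : ℕ → Set W) (Φ : Set Fml) (x y : W) : Prop :=
  ∀ φ ∈ Φ, (sat R V x φ ↔ sat R V y φ)

/-- The filtration equivalence class [x]. -/
def ecl {W : Type} (R : W → W → Prop) (V : ℕ → Set W) (Φ : Set Fml) (x : W) : Set W :=
  {y | eqv R V Φ x y}

/-- The transitive filtration relation (on representatives):
[x] R_Φ [y] iff for all □φ ∈ Φ true at x, both φ and □φ are true at y. -/
def Rf {W : Type} (R : W → W → Prop) (V : ℕ → Set W) (Φ : Set Fml) (x y : W) : Prop :=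
  ∀ φ, Fml.box φ ∈ Φ → sat R V x (Fml.box φ) → (sat R V y φ ∧ sat R V y (Fml.box φ))

/-- The R_Φ-cluster of [x], as a set of equivalence classes. -/
def fCluster {W : Type} (R : W → W → Prop) (V : ℕ → Set W) (Φ : Set Fml) (x : W) :
    Set (Set W) :=
  {α | ∃ y, α = ecl R V Φ y ∧ (eqv R V Φ x y ∨ (Rf R V Φ x y ∧ Rf R V Φ y x))}


namespace Stmt9Aux

variable {W : Type} {R : W → W → Prop} {V : ℕ → Set W} {Φ : Set Fml}

lemma sat_neg {x : W} {φ : Fml} : sat R V x (.neg φ) ↔ ¬ sat R V x φ := Iff.rfl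
lemma sat_and {x : W} {φ ψ : Fml} :
    sat R V x (.and φ ψ) ↔ sat R V x φ ∧ sat R V x ψ := Iff.rfl
lemma sat_box {x : W} {φ : Fml} :
    sat R V x (.box φ) ↔ ∀ y, R x y → sat R V y φ := Iff.rfl

lemma sat_dia {x : W} {φ : Fml} :
    sat R V x (Fml.dia φ) ↔ ∃ y, R x y ∧ sat R V y φ := by
  simp only [Fml.dia, sat_neg, sat_box]
  push_neg
  simp only [sat_neg, not_not]

lemma sat_imp {x : W} {φ ψ : Fml} :
    sat R V x (φ.imp ψ) ↔ (sat R V x φ → sat R V x ψ) := by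
  simp only [Fml.imp, sat_neg, sat_and]
  tauto

lemma sat_boxs {x : W} {φ : Fml} :
    sat R V x (Fml.boxs φ) ↔ sat R V x φ ∧ ∀ y, R x y → sat R V y φ := Iff.rfl

lemma eqv_refl (x : W) : eqv R V Φ x x := fun _ _ => Iff.rfl
lemma eqv_symm {x y : W} (h : eqv R V Φ x y) : eqv R V Φ y x := fun φ hφ => (h φ hφ).symm
lemma eqv_trans {x y z : W} (h1 : eqv R V Φ x y) (h2 : eqv R V Φ y z) : eqv R V Φ x z :=
  fun φ hφ => (h1 φ hφ).trans (h2 φ hφ)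

lemma mem_ecl {x y : W} : y ∈ ecl R V Φ x ↔ eqv R V Φ x y := Iff.rfl

lemma ecl_congr {a b : W} (h : eqv R V Φ a b) : ecl R V Φ a = ecl R V Φ b := by
  ext z
  exact ⟨fun hz => eqv_trans (eqv_symm h) hz, fun hz => eqv_trans h hz⟩

lemma ecl_eq (R : W → W → Prop) (V : ℕ → Set W) (Φ : Set Fml) (y : W) :
    ecl R V Φ y = {z | Φ ∩ {φ | sat R V z φ} = Φ ∩ {φ | sat R V y φ}} := by
  ext z
  simp only [ecl, eqv, Set.mem_setOf_eq, Set.ext_iff, Set.mem_inter_iff]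
  constructor
  · intro h φ
    by_cases hφ : φ ∈ Φ
    · have := h φ hφ; tauto
    · tauto
  · intro h φ hφ
    have := h φ; tauto

lemma rf_congr_left {a a' b : W} (h : eqv R V Φ a a') (hr : Rf R V Φ a b) : Rf R V Φ a' b :=
  fun φ hφ hb => hr φ hφ ((h _ hφ).mpr hb)

lemma rf_congr_right (hsc : SubClosed Φ) {a b b' : W} (h : eqv R V Φ b b')
    (hr : Rf R V Φ a b) : Rf R V Φ a b' := by
  intro φ hφ hb
  obtain ⟨h1, h2⟩ := hr φ hφ hb
  exact ⟨(h φ (hsc.2.2 φ hφ)).mp h1, (h _ hφ).mp h2⟩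

lemma rf_trans {a b c : W} (h1 : Rf R V Φ a b) (h2 : Rf R V Φ b c) : Rf R V Φ a c :=
  fun φ hφ hb => h2 φ hφ (h1 φ hφ hb).2

open Classical in
noncomputable def chi (R : W → W → Prop) (V : ℕ → Set W) (L : List Fml) (y : W) : Fml :=
  L.foldr (fun φ acc => .and (if sat R V y φ then φ else .neg φ) acc) .top

open Classical in
lemma sat_chi {L : List Fml} {y z : W} :
    sat R V z (chi R V L y) ↔ ∀ φ ∈ L, (sat R V y φ ↔ sat R V z φ) := by
  induction L with
  | nil => simp [chi, sat]
  | cons φ l ih =>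
    have hstep : chi R V (φ :: l) y
        = .and (if sat R V y φ then φ else .neg φ) (chi R V l y) := rfl
    rw [hstep, sat_and, ih]
    by_cases h : sat R V y φ
    · rw [if_pos h]
      simp only [List.forall_mem_cons]
      tauto
    · rw [if_neg h]
      simp only [List.forall_mem_cons, sat_neg]
      tauto

lemma sat_conjNeg {z : W} {φ : Fml} {l : List Fml} :
    sat R V z (conjNeg φ l) ↔ ∀ ψ ∈ l, ¬(sat R V z φ ∧ sat R V z ψ) := by
  induction l with
  | nil => simp [conjNeg, sat]
  | cons ψ l ih =>
    have hstep : conjNeg φ (ψ :: l) = .and (.neg (.and φ ψ)) (conjNeg φ l) := rfl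
    rw [hstep, sat_and, sat_neg, sat_and, ih]
    simp only [List.forall_mem_cons]

lemma sat_Dfml {z : W} {l : List Fml} :
    sat R V z (Dfml l) ↔ List.Pairwise (fun φ ψ => ¬(sat R V z φ ∧ sat R V z ψ)) l := by
  induction l with
  | nil => simp [Dfml, sat]
  | cons φ l ih =>
    have hstep : Dfml (φ :: l) = .and (conjNeg φ l) (Dfml l) := rfl
    rw [hstep, sat_and, ih, sat_conjNeg, List.pairwise_cons]

lemma exists_reps {γ : Type} (f : W → γ) :
    ∀ l : List γ, (∀ a ∈ l, ∃ y, a = f y) → ∃ ys : List W, ys.map f = l := by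
  intro l
  induction l with
  | nil => exact fun _ => ⟨[], rfl⟩
  | cons a l ih =>
    intro h
    obtain ⟨ys, hys⟩ := ih fun b hb => h b (List.mem_cons_of_mem _ hb)
    obtain ⟨y, hy⟩ := h a (List.mem_cons_self)
    exact ⟨y :: ys, by simp [hys, hy]⟩

end Stmt9Aux

/-- for each R_Φ-cluster C there are a critical point x* with [x*] ∈ C
and C* ⊆ C of size at most n such that x* sees into every α ∈ C*, and whenever
x* R y with [y] ∈ C, then [y] ∈ C* and y sees into every α ∈ C*; if C is
degenerate then C* = ∅. -/
theorem stmt9 {W : Type} (R : W → W → Prop) (V : ℕ → Set W) (Φ : Set Fml) (n : ℕ)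
    (hT : Transitive R) (hfin : Φ.Finite) (hsc : SubClosed Φ)
    (hC : ∀ (φ0 : Fml) (φs : List Fml), φs.length = n → ∀ x, sat R V x (Cfml φ0 φs)) :
    ∀ x : W, ∃ (xs : W) (Cs : Set (Set W)),
      ecl R V Φ xs ∈ fCluster R V Φ x ∧
      Cs ⊆ fCluster R V Φ x ∧ Cs.Finite ∧ Cs.ncard ≤ n ∧
      (∀ α ∈ Cs, ∃ y ∈ α, R xs y) ∧
      (∀ y, R xs y → ecl R V Φ y ∈ fCluster R V Φ x →
        ecl R V Φ y ∈ Cs ∧ ∀ α ∈ Cs, ∃ z ∈ α, R y z) ∧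
      ((∀ y, ecl R V Φ y ∈ fCluster R V Φ x → ¬ Rf R V Φ y y) → Cs = ∅) := by
  classical
  intro x
  open Stmt9Aux in
  set C := fCluster R V Φ x with hC_def
  have hCfin : C.Finite := by
    have hsub : C ⊆ (fun s => {z | Φ ∩ {φ | sat R V z φ} = s}) '' {s | s ⊆ Φ} := by
      rintro α ⟨y, rfl, -⟩
      exact ⟨Φ ∩ {φ | sat R V y φ}, Set.inter_subset_left, (Stmt9Aux.ecl_eq R V Φ y).symm⟩
    exact ((hfin.finite_subsets).image _).subset hsub
  set S : W → Set (Set W) := fun z => {α | α ∈ C ∧ ∃ y ∈ α, R z y} with hS_def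
  have hSsub : ∀ z, S z ⊆ C := fun z α hα => hα.1
  have hSfin : ∀ z, (S z).Finite := fun z => hCfin.subset (hSsub z)
  have hxC : ecl R V Φ x ∈ C := ⟨x, rfl, Or.inl (Stmt9Aux.eqv_refl x)⟩
  -- minimization
  have hKne : ∃ k, k ∈ {k | ∃ z, ecl R V Φ z ∈ C ∧ (S z).ncard = k} := ⟨_, x, hxC, rfl⟩
  obtain ⟨xs, hxsC, hxs_card⟩ := Nat.sInf_mem hKne
  have hmin : ∀ z, ecl R V Φ z ∈ C → (S xs).ncard ≤ (S z).ncard := by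
    intro z hz
    rw [hxs_card]
    exact Nat.sInf_le ⟨z, hz, rfl⟩
  have hkey : ∀ z, R xs z → ecl R V Φ z ∈ C → S z = S xs := by
    intro z hz hzC
    refine Set.eq_of_subset_of_ncard_le ?_ (hmin z hzC) (hSfin xs)
    rintro α ⟨hαC, y, hy, hzy⟩
    exact ⟨hαC, y, hy, hT hz hzy⟩
  have hsees : ∀ z, R xs z → ecl R V Φ z ∈ C → ∀ α ∈ S xs, ∃ u ∈ α, R z u := by
    intro z hz hzC α hα
    rw [← hkey z hz hzC] at hα
    exact hα.2
  have hrfR : ∀ {a b : W}, R a b → Rf R V Φ a b := by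
    intro a b hab φ hφ hb
    exact ⟨hb _ hab, fun u hu => hb u (hT hab hu)⟩
  have hclrel : ∀ a b : W, ecl R V Φ a ∈ C → ecl R V Φ b ∈ C →
      (eqv R V Φ a b ∨ Rf R V Φ a b) := by
    rintro a b ⟨a', ha', hA⟩ ⟨b', hb', hB⟩
    have haa' : eqv R V Φ a a' := by
      have : a' ∈ ecl R V Φ a := by rw [ha']; exact Stmt9Aux.eqv_refl a'
      exact this
    have hbb' : eqv R V Φ b b' := by
      have : b' ∈ ecl R V Φ b := by rw [hb']; exact Stmt9Aux.eqv_refl b'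
      exact this
    rcases hA with hxa | ⟨_, hax⟩ <;> rcases hB with hxb | ⟨hxb, _⟩
    · exact Or.inl (eqv_trans haa' (eqv_trans (eqv_symm hxa)
        (eqv_trans hxb (eqv_symm hbb'))))
    · refine Or.inr ?_
      have h1 : Rf R V Φ a b' :=
        rf_congr_left (eqv_trans hxa (eqv_symm haa')) hxb
      exact rf_congr_right hsc (eqv_symm hbb') h1
    · refine Or.inr ?_
      have h1 : Rf R V Φ a x := rf_congr_left (eqv_symm haa') hax
      exact rf_congr_right hsc (eqv_trans hxb (eqv_symm hbb')) h1
    · refine Or.inr ?_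
      have h1 : Rf R V Φ a x := rf_congr_left (eqv_symm haa') hax
      have h2 : Rf R V Φ a b' := rf_trans h1 hxb
      exact rf_congr_right hsc (eqv_symm hbb') h2
  have hdeg : (∀ y, ecl R V Φ y ∈ C → ¬ Rf R V Φ y y) → S xs = ∅ := by
    intro hd
    rw [Set.eq_empty_iff_forall_notMem]
    rintro α ⟨hαC, y, hyα, hxy⟩
    obtain ⟨y', rfl, hrel⟩ := hαC
    have hyC : ecl R V Φ y ∈ C := by
      rw [← ecl_congr (Stmt9Aux.mem_ecl.mp hyα)]
      exact ⟨y', rfl, hrel⟩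
    have h1 : Rf R V Φ xs y := hrfR hxy
    have h2 : Rf R V Φ y y := by
      rcases hclrel y xs hyC hxsC with he | hr
      · exact rf_congr_left (eqv_symm he) h1
      · exact rf_trans hr h1
    exact hd y hyC h2
  -- characteristic formulas
  set L := hfin.toFinset.toList with hL
  have hLmem : ∀ φ, φ ∈ L ↔ φ ∈ Φ := by
    intro φ
    rw [hL, Finset.mem_toList, Set.Finite.mem_toFinset]
  have hchi : ∀ y z : W, sat R V z (Stmt9Aux.chi R V L y) ↔ eqv R V Φ y z := by
    intro y z
    rw [Stmt9Aux.sat_chi]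
    constructor
    · intro h φ hφ; exact h φ ((hLmem φ).mpr hφ)
    · intro h φ hφ; exact h φ ((hLmem φ).mp hφ)
  -- cardinality bound
  have hcard : (S xs).ncard ≤ n := by
    by_contra hlt
    push_neg at hlt
    have h1 : n + 1 ≤ ((hSfin xs).toFinset).card := by
      rw [← Set.ncard_eq_toFinset_card _ (hSfin xs)]
      exact hlt
    obtain ⟨t, htsub, htcard⟩ := Finset.exists_subset_card_eq h1
    set l : List (Set W) := t.toList with hl
    have hlnd : l.Nodup := Finset.nodup_toList t
    have hllen : l.length = n + 1 := by rw [hl, Finset.length_toList, htcard]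
    have hlmem : ∀ α ∈ l, α ∈ S xs := by
      intro α hα
      have := htsub (Finset.mem_toList.mp hα)
      exact (Set.Finite.mem_toFinset _).mp this
    obtain ⟨ys, hysl⟩ := Stmt9Aux.exists_reps (ecl R V Φ) l (by
      intro a ha
      obtain ⟨y', hy', -⟩ := hSsub xs (hlmem a ha)
      exact ⟨y', hy'⟩)
    have hyslen : ys.length = n + 1 := by
      have := congrArg List.length hysl
      rw [List.length_map] at this
      rw [this, hllen]
    obtain ⟨y0, yr, rfl⟩ : ∃ y0 yr, ys = y0 :: yr := by
      cases ys with
      | nil => simp at hyslen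
      | cons a b => exact ⟨a, b, rfl⟩
    have hysS : ∀ y ∈ y0 :: yr, ecl R V Φ y ∈ S xs := by
      intro y hy
      refine hlmem _ ?_
      rw [← hysl]
      exact List.mem_map_of_mem hy
    have hchain : ∀ l' : List W, (∀ y ∈ l', ecl R V Φ y ∈ S xs) →
        ∀ z, R xs z → ecl R V Φ z ∈ C →
        sat R V z (Pfml (Stmt9Aux.chi R V L y0) (l'.map (Stmt9Aux.chi R V L))) := by
      intro l'
      induction l' with
      | nil =>
        intro _ z hz hzC
        obtain ⟨u, hu, hzu⟩ := hsees z hz hzC _ (hysS y0 (List.mem_cons_self))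
        exact Stmt9Aux.sat_dia.mpr ⟨u, hzu, (hchi y0 u).mpr hu⟩
      | cons y lr ih =>
        intro hmem z hz hzC
        obtain ⟨u, hu, hzu⟩ := hsees z hz hzC _ (hmem y (List.mem_cons_self))
        have huC : ecl R V Φ u ∈ C := by
          rw [← ecl_congr (Stmt9Aux.mem_ecl.mp hu)]
          exact hSsub xs (hmem y (List.mem_cons_self))
        have hrec := ih (fun y' h => hmem y' (List.mem_cons_of_mem _ h)) u (hT hz hzu) huC
        exact Stmt9Aux.sat_dia.mpr ⟨u, hzu, (hchi y u).mpr hu, hrec⟩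
    set φ0 := Stmt9Aux.chi R V L y0 with hφ0
    set φs := yr.map (Stmt9Aux.chi R V L) with hφs
    have hlen : φs.length = n := by
      rw [hφs, List.length_map]
      have : yr.length + 1 = n + 1 := by simpa using hyslen
      omega
    have hcn := hC φ0 φs hlen xs
    unfold Cfml at hcn
    have hDall : ∀ z, sat R V z (Dfml (φ0 :: φs)) := by
      intro z
      rw [Stmt9Aux.sat_Dfml]
      have hrw : (φ0 :: φs) = (y0 :: yr).map (Stmt9Aux.chi R V L) := rfl
      rw [hrw, List.pairwise_map]
      have hnd : List.Pairwise (fun a b => ecl R V Φ a ≠ ecl R V Φ b) (y0 :: yr) := by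
        have h' : ((y0 :: yr).map (ecl R V Φ)).Pairwise (· ≠ ·) := by
          rw [hysl]; exact hlnd
        exact List.pairwise_map.mp h'
      refine hnd.imp ?_
      rintro a b hab ⟨ha, hb⟩
      exact hab (ecl_congr (eqv_trans ((hchi a z).mp ha) (eqv_symm ((hchi b z).mp hb))))
    have hD : sat R V xs (Fml.boxs (Dfml (φ0 :: φs))) :=
      ⟨hDall xs, fun u _ => hDall u⟩
    have hd0 : sat R V xs (Fml.dia φ0) := by
      obtain ⟨u, hu, hxsu⟩ := (hysS y0 (List.mem_cons_self)).2
      exact Stmt9Aux.sat_dia.mpr ⟨u, hxsu, (hchi y0 u).mpr hu⟩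
    have hfinal := (Stmt9Aux.sat_imp.mp ((Stmt9Aux.sat_imp.mp hcn) hD)) hd0
    obtain ⟨w, hxw, hw0, hwP⟩ := Stmt9Aux.sat_dia.mp hfinal
    have hwC : ecl R V Φ w ∈ C := by
      rw [← ecl_congr ((hchi y0 w).mp hw0)]
      exact hSsub xs (hysS y0 (List.mem_cons_self))
    exact hwP (hchain yr (fun y h => hysS y (List.mem_cons_of_mem _ h)) w hxw hwC)
  refine ⟨xs, S xs, hxsC, hSsub xs, hSfin xs, hcard, ?_, ?_, hdeg⟩
  · rintro α ⟨-, hy⟩; exact hy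
  · intro y hy hyC
    exact ⟨⟨hyC, y, Stmt9Aux.eqv_refl y, hy⟩, hsees y hy hyC⟩
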